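/- Let $0 < \delta \leq R \leq 1$ and let $f(x) = (x_1 \cdots x_d)^{1/d}$ on $[0,1]^d$. Define $\Omega_R = \{x \in [0,1]^d : f(x) > R\}$ and $\partial_R\Omega = \{x \in [0,1]^d : f(x) = R\}$. Then there exists a constant $c_d > 0$ depending only on $d$ such that for every $y \in \Omega_{R+\delta}$, $\mathrm{dist}(y, \partial_R\Omega) \geq c_d\, \delta R^{d-1}$. -/

import Mathlib

/-- Product difference bound for coordinates in `[0,1]`. -/
lemma prod_sub_prod_le_sum_abs {d : ℕ} (x y : Fin d → ℝ)
    (hx : ∀ i, x i ∈ Set.Icc (0 : ℝ) 1) (hy : ∀ i, y i ∈ Set.Icc (0 : ℝ) 1) :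
    ∀ s : Finset (Fin d), ∏ i ∈ s, y i - ∏ i ∈ s, x i ≤ ∑ i ∈ s, |y i - x i| := by
  intro s
  induction s using Finset.induction with
  | empty => simp
  | @insert a s ha ih =>
    rw [Finset.prod_insert ha, Finset.prod_insert ha, Finset.sum_insert ha]
    have hprod_x : 0 ≤ ∏ i ∈ s, x i := Finset.prod_nonneg fun i _ => (hx i).1
    have hprod_x1 : ∏ i ∈ s, x i ≤ 1 :=
      Finset.prod_le_one (fun i _ => (hx i).1) (fun i _ => (hx i).2)
    have hya0 := (hy a).1
    have hya1 := (hy a).2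
    have : y a * ∏ i ∈ s, y i - x a * ∏ i ∈ s, x i
        = y a * (∏ i ∈ s, y i - ∏ i ∈ s, x i) + (y a - x a) * ∏ i ∈ s, x i := by ring
    rw [this]
    have h1 : y a * (∏ i ∈ s, y i - ∏ i ∈ s, x i) ≤ ∑ i ∈ s, |y i - x i| := by
      calc y a * (∏ i ∈ s, y i - ∏ i ∈ s, x i) ≤ y a * ∑ i ∈ s, |y i - x i| := by
            apply mul_le_mul_of_nonneg_left ih hya0
        _ ≤ 1 * ∑ i ∈ s, |y i - x i| := by
            apply mul_le_mul_of_nonneg_right hya1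
            exact Finset.sum_nonneg fun i _ => abs_nonneg _
        _ = _ := one_mul _
    have h2 : (y a - x a) * ∏ i ∈ s, x i ≤ |y a - x a| := by
      calc (y a - x a) * ∏ i ∈ s, x i ≤ |y a - x a| * ∏ i ∈ s, x i :=
            mul_le_mul_of_nonneg_right (le_abs_self _) hprod_x
        _ ≤ |y a - x a| * 1 := mul_le_mul_of_nonneg_left hprod_x1 (abs_nonneg _)
        _ = _ := mul_one _
    linarith

/-- Binomial-type lower bound: `a^d - b^d ≥ d * b^(d-1) * (a - b)` for `0 ≤ b ≤ a`. -/
lemma pow_sub_pow_ge {a b : ℝ} (hb : 0 ≤ b) (hab : b ≤ a) (d : ℕ) :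
    (d : ℝ) * b ^ (d - 1) * (a - b) ≤ a ^ d - b ^ d := by
  rw [← geom_sum₂_mul a b d]
  apply mul_le_mul_of_nonneg_right _ (by linarith)
  calc (d : ℝ) * b ^ (d - 1) = ∑ _i ∈ Finset.range d, b ^ (d - 1) := by
        rw [Finset.sum_const, Finset.card_range, nsmul_eq_mul]
    _ ≤ ∑ i ∈ Finset.range d, a ^ i * b ^ (d - 1 - i) := by
        apply Finset.sum_le_sum
        intro i hi
        rw [Finset.mem_range] at hi
        have h1 : b ^ (d - 1) = b ^ i * b ^ (d - 1 - i) := by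
          rw [← pow_add]
          congr 1
          omega
        rw [h1]
        apply mul_le_mul_of_nonneg_right (pow_le_pow_left₀ hb hab i)
          (pow_nonneg hb _)

/-- Distance from `Ω_{R+δ}` to the boundary piece `∂_R Ω`: there is a constant
`c_d > 0` depending only on `d` such that for `0 < δ ≤ R ≤ 1` every point of
`Ω_{R+δ}` is at (Euclidean) distance at least `c_d δ R^{d-1}` from `∂_R Ω`. -/
theorem dist_to_boundary_lower_bound (d : ℕ) (hd : 0 < d) :
    ∃ c : ℝ, 0 < c ∧ ∀ R δ : ℝ, 0 < δ → δ ≤ R → R ≤ 1 →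
      ∀ y : EuclideanSpace ℝ (Fin d),
        (∀ i, y i ∈ Set.Icc (0 : ℝ) 1) → (∏ i, y i) ^ ((1 : ℝ) / d) > R + δ →
        Metric.infDist y {x : EuclideanSpace ℝ (Fin d) |
            (∀ i, x i ∈ Set.Icc (0 : ℝ) 1) ∧ (∏ i, x i) ^ ((1 : ℝ) / d) = R}
          ≥ c * δ * R ^ (d - 1) := by
  refine ⟨1, one_pos, ?_⟩
  intro R δ hδ hδR hR1 y hy hfy
  set S := {x : EuclideanSpace ℝ (Fin d) |
      (∀ i, x i ∈ Set.Icc (0 : ℝ) 1) ∧ (∏ i, x i) ^ ((1 : ℝ) / d) = R}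
  have hR0 : 0 < R := lt_of_lt_of_le hδ hδR
  -- S is nonempty: the point (R, ..., R)
  have hSne : S.Nonempty := by
    refine ⟨WithLp.toLp 2 (fun _ => R), fun i => ⟨hR0.le, hR1⟩, ?_⟩
    change (∏ _i : Fin d, R) ^ ((1:ℝ)/d) = R
    rw [Finset.prod_const, Finset.card_univ, Fintype.card_fin]
    rw [← Real.rpow_natCast R d, ← Real.rpow_mul hR0.le]
    rw [mul_one_div, div_self (by exact_mod_cast hd.ne'), Real.rpow_one]
  rw [ge_iff_le, one_mul]
  by_contra hc
  push_neg at hc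
  obtain ⟨x, hxS, hlt⟩ := (Metric.infDist_lt_iff hSne).mp hc
  obtain ⟨hx1, hx2⟩ := hxS
  suffices hgood : δ * R ^ (d - 1) ≤ dist y x by linarith
  -- key facts about products
  have hdR : (0 : ℝ) < d := by exact_mod_cast hd
  have hprodx_nonneg : 0 ≤ ∏ i, x i := Finset.prod_nonneg fun i _ => (hx1 i).1
  have hprody_nonneg : 0 ≤ ∏ i, y i := Finset.prod_nonneg fun i _ => (hy i).1
  have hprodx : ∏ i, x i = R ^ d := by
    have := congrArg (fun t => t ^ (d : ℝ)) hx2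
    simp only at this
    rw [← Real.rpow_mul hprodx_nonneg, one_div,
      inv_mul_cancel₀ hdR.ne', Real.rpow_one] at this
    rw [this, ← Real.rpow_natCast]
  have hprody : (R + δ) ^ d < ∏ i, y i := by
    have h1 : (R + δ) ^ (d:ℝ) < ((∏ i, y i) ^ ((1:ℝ)/d)) ^ (d:ℝ) := by
      apply Real.rpow_lt_rpow (by linarith) hfy hdR
    rw [← Real.rpow_mul hprody_nonneg, one_div,
      inv_mul_cancel₀ hdR.ne', Real.rpow_one] at h1
    rwa [Real.rpow_natCast] at h1
  -- product difference bounded by sum of coordinate differences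
  have hkey : ∏ i, y i - ∏ i, x i ≤ ∑ i, |y i - x i| :=
    prod_sub_prod_le_sum_abs x y hx1 hy Finset.univ
  -- each coordinate difference bounded by dist
  have hcoord : ∀ i, |y i - x i| ≤ dist y x := by
    intro i
    have h := EuclideanSpace.dist_eq y x
    rw [h]
    have : |y i - x i| = Real.sqrt ((y i - x i) ^ 2) := (Real.sqrt_sq_eq_abs _).symm
    rw [this]
    apply Real.sqrt_le_sqrt
    exact Finset.single_le_sum (f := fun j => dist (y j) (x j) ^ 2)
      (fun j _ => sq_nonneg _) (Finset.mem_univ i) |>.trans_eq' (by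
        rw [Real.dist_eq, sq_abs])
  have hsum : ∑ i, |y i - x i| ≤ d * dist y x := by
    calc ∑ i, |y i - x i| ≤ ∑ _i : Fin d, dist y x :=
          Finset.sum_le_sum fun i _ => hcoord i
      _ = d * dist y x := by
          rw [Finset.sum_const, Finset.card_univ, Fintype.card_fin, nsmul_eq_mul]
  -- binomial bound
  have hbin : (d : ℝ) * R ^ (d - 1) * δ ≤ (R + δ) ^ d - R ^ d := by
    have := pow_sub_pow_ge hR0.le (by linarith : R ≤ R + δ) d
    simpa using this
  -- combine
  have hRd1 : (0:ℝ) ≤ R ^ (d-1) := pow_nonneg hR0.le _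
  have : (d : ℝ) * R ^ (d - 1) * δ ≤ d * dist y x := by
    calc (d : ℝ) * R ^ (d - 1) * δ ≤ (R + δ) ^ d - R ^ d := hbin
      _ ≤ ∏ i, y i - ∏ i, x i := by rw [hprodx]; linarith
      _ ≤ ∑ i, |y i - x i| := hkey
      _ ≤ d * dist y x := hsum
  have hout : R ^ (d - 1) * δ ≤ dist y x := by
    have := (mul_le_mul_iff_right₀ hdR).mp (by linarith [this] :
      (d : ℝ) * (R ^ (d - 1) * δ) ≤ d * dist y x)
    linarith
  linarith [hout]
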